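/- Let n ≥ 2 and let X_1, …, X_n be independent random variables, where X_i is Gaussian with mean μ_i and variance σ_i², with μ_i ≥ 0 for every i. Then E[max(X_1, …, X_n)] ≥ (1 − 2^{1−n}) · E[max(0, X_1, …, X_n)]. -/

import Mathlib

open MeasureTheory ProbabilityTheory Real
open scoped NNReal ENNReal


lemma my_integrable_id_gaussianReal (m : ℝ) (v : ℝ≥0) :
    Integrable id (gaussianReal m v) := by
  suffices h0 : Integrable id (gaussianReal 0 v) by
    have hmap : (gaussianReal 0 v).map (· + m) = gaussianReal m v := by
      simpa using gaussianReal_map_add_const (μ := 0) (v := v) m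
    rw [← hmap]
    rw [integrable_map_measure aestronglyMeasurable_id (measurable_id'.add_const m).aemeasurable]
    exact (h0.add (integrable_const m) : _)
  rcases eq_or_ne v 0 with hv | hv
  · rw [hv, gaussianReal_zero_var]
    exact (integrable_const (0:ℝ)).congr (ae_eq_dirac (id : ℝ → ℝ)).symm
  · rw [gaussianReal_of_var_ne_zero 0 hv,
      integrable_withDensity_iff (measurable_gaussianPDF 0 v)
        (ae_of_all _ fun x => ENNReal.ofReal_lt_top)]
    have hvpos : (0:ℝ) < (v:ℝ) := by positivity
    have hb : (0:ℝ) < (2 * (v:ℝ))⁻¹ := by positivity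
    have h := (integrable_mul_exp_neg_mul_sq hb).const_mul (Real.sqrt (2 * π * v))⁻¹
    refine h.congr (ae_of_all _ fun x => ?_)
    simp only [gaussianPDF, gaussianPDFReal, ENNReal.toReal_ofReal
      (by positivity : (0:ℝ) ≤ (Real.sqrt (2 * π * v))⁻¹ * Real.exp (-(x - 0)^2 / (2 * v)))]
    simp only [id_eq]
    ring_nf

lemma my_gaussianReal_map_neg (v : ℝ≥0) :
    (gaussianReal 0 v).map (fun x => -x) = gaussianReal 0 v := by
  have h := gaussianReal_map_const_mul (μ := 0) (v := v) (-1)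
  have h1 : (⟨(-1:ℝ)^2, sq_nonneg _⟩ : ℝ≥0) = 1 := by ext; norm_num
  simpa [h1, neg_one_mul] using h

lemma my_gaussianReal_Iio_le_half (m : ℝ) (v : ℝ≥0) (hm : 0 ≤ m) :
    gaussianReal m v (Set.Iio 0) ≤ 2⁻¹ := by
  have hsymm : gaussianReal 0 v (Set.Iio 0) = gaussianReal 0 v (Set.Ioi 0) := by
    conv_rhs => rw [← my_gaussianReal_map_neg v]
    rw [Measure.map_apply measurable_neg measurableSet_Ioi]
    congr 1
    ext x
    simp
  have hsum : gaussianReal 0 v (Set.Iio 0) + gaussianReal 0 v (Set.Ioi 0) ≤ 1 := by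
    rw [← measure_union (by simp only [Set.disjoint_left, Set.mem_Iio, Set.mem_Ioi]; intro a h1 h2; linarith) measurableSet_Ioi]
    exact (measure_mono (Set.subset_univ _)).trans_eq measure_univ
  have hhalf : gaussianReal 0 v (Set.Iio 0) ≤ 2⁻¹ := by
    rw [← hsymm] at hsum
    rw [ENNReal.le_inv_iff_mul_le]
    calc gaussianReal 0 v (Set.Iio 0) * 2
        = gaussianReal 0 v (Set.Iio 0) + gaussianReal 0 v (Set.Iio 0) := by ring
    _ ≤ 1 := hsum
  have hmap : (gaussianReal 0 v).map (· + m) = gaussianReal m v := by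
    simpa using gaussianReal_map_add_const (μ := 0) (v := v) m
  rw [← hmap, Measure.map_apply (measurable_id'.add_const m) measurableSet_Iio]
  refine le_trans (measure_mono ?_) hhalf
  intro x hx
  simp only [Set.mem_preimage, Set.mem_Iio] at hx ⊢
  linarith

lemma my_gauss_negpart_le_pospart (m : ℝ) (v : ℝ≥0) (hm : 0 ≤ m) :
    ∫ x, max (-x) 0 ∂(gaussianReal m v) ≤ ∫ x, max x 0 ∂(gaussianReal m v) := by
  have hid : Integrable (fun x => x) (gaussianReal 0 v) := my_integrable_id_gaussianReal 0 v
  have hint : ∀ (a b : ℝ), Integrable (fun x => max (a * x + b) 0) (gaussianReal 0 v) := by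
    intro a b
    have h1 : Integrable (fun x => a * x + b) (gaussianReal 0 v) :=
      (hid.const_mul a).add (integrable_const b)
    simpa [Pi.sup_def] using h1.sup (integrable_const (0:ℝ))
  have I1 : Integrable (fun x => max (-(x + m)) 0) (gaussianReal 0 v) := by
    have e : (fun x : ℝ => max ((-1) * x + (-m)) 0) = fun x => max (-(x + m)) 0 := by
      funext x; rw [show (-1:ℝ)*x + -m = -(x+m) from by ring]
    exact e ▸ hint (-1) (-m)
  have I2 : Integrable (fun x => max (-x) 0) (gaussianReal 0 v) := by
    have e : (fun x : ℝ => max ((-1) * x + 0) 0) = fun x => max (-x) 0 := by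
      funext x; rw [show (-1:ℝ)*x + 0 = -x from by ring]
    exact e ▸ hint (-1) 0
  have I3 : Integrable (fun x => max x 0) (gaussianReal 0 v) := by
    have e : (fun x : ℝ => max (1 * x + 0) 0) = fun x => max x 0 := by
      funext x; rw [show (1:ℝ)*x + 0 = x from by ring]
    exact e ▸ hint 1 0
  have I4 : Integrable (fun x => max (x + m) 0) (gaussianReal 0 v) := by
    have e : (fun x : ℝ => max (1 * x + m) 0) = fun x => max (x + m) 0 := by
      funext x; rw [show (1:ℝ)*x + m = x + m from by ring]
    exact e ▸ hint 1 m
  have hmap : (gaussianReal 0 v).map (· + m) = gaussianReal m v := by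
    simpa using gaussianReal_map_add_const (μ := 0) (v := v) m
  have hmeas_add : AEMeasurable (· + m) (gaussianReal 0 v) :=
    (measurable_id'.add_const m).aemeasurable
  have e1 : ∫ x, max (-x) 0 ∂(gaussianReal m v)
      = ∫ x, max (-(x + m)) 0 ∂(gaussianReal 0 v) := by
    rw [← hmap, integral_map hmeas_add]
    exact (measurable_neg.max measurable_const).aestronglyMeasurable
  have e2 : ∫ x, max x 0 ∂(gaussianReal m v)
      = ∫ x, max (x + m) 0 ∂(gaussianReal 0 v) := by
    rw [← hmap, integral_map hmeas_add]
    exact (measurable_id.max measurable_const).aestronglyMeasurable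
  have esymm : ∫ x, max (-x) 0 ∂(gaussianReal 0 v) = ∫ x, max x 0 ∂(gaussianReal 0 v) := by
    calc ∫ x, max (-x) 0 ∂(gaussianReal 0 v)
        = ∫ x, max x 0 ∂((gaussianReal 0 v).map (fun x => -x)) :=
          (integral_map measurable_neg.aemeasurable
            (measurable_id'.max measurable_const).aestronglyMeasurable).symm
    _ = ∫ x, max x 0 ∂(gaussianReal 0 v) := by rw [my_gaussianReal_map_neg]
  rw [e1, e2]
  calc ∫ x, max (-(x + m)) 0 ∂(gaussianReal 0 v)
      ≤ ∫ x, max (-x) 0 ∂(gaussianReal 0 v) :=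
        integral_mono I1 I2 fun x => max_le_max (by linarith) le_rfl
  _ = ∫ x, max x 0 ∂(gaussianReal 0 v) := esymm
  _ ≤ ∫ x, max (x + m) 0 ∂(gaussianReal 0 v) :=
        integral_mono I3 I4 fun x => max_le_max (by linarith) le_rfl

/-- For `n ≥ 2` independent Gaussians with nonnegative means,
`E[max_i X_i] ≥ (1 - 2^{1-n}) E[max(0, max_i X_i)]`. -/
theorem expected_max_ge_positive_part
    (n : ℕ) (hn : 2 ≤ n)
    (Ω : Type) [MeasurableSpace Ω] (P : Measure Ω) [IsProbabilityMeasure P]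
    (μ σ : Fin n → ℝ) (hμ : ∀ i, 0 ≤ μ i) (hσ : ∀ i, 0 ≤ σ i)
    (X : Fin n → Ω → ℝ) (hmeas : ∀ i, Measurable (X i))
    (hindep : iIndepFun X P)
    (hX : ∀ i, Measure.map (X i) P = gaussianReal (μ i) (Real.toNNReal (σ i ^ 2))) :
    (1 - (2 : ℝ) ^ (1 - (n : ℤ))) * (∫ ω, max 0 (⨆ i, X i ω) ∂P) ≤ ∫ ω, ⨆ i, X i ω ∂P := by
  classical
  haveI : NeZero n := ⟨by omega⟩
  set c : ℝ := (2 : ℝ) ^ (1 - (n : ℤ)) with hc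
  let M : Ω → ℝ := fun ω => ⨆ i, X i ω
  have hbdd : ∀ ω, BddAbove (Set.range fun i => X i ω) :=
    fun ω => Set.Finite.bddAbove (Set.finite_range _)
  have hle : ∀ i ω, X i ω ≤ M ω := fun i ω => le_ciSup (hbdd ω) i
  have hM_meas : Measurable M := Measurable.iSup fun i => hmeas i
  have hXint : ∀ i, Integrable (X i) P := by
    intro i
    have h1 : Integrable id (Measure.map (X i) P) := by
      rw [hX i]; exact my_integrable_id_gaussianReal _ _
    rwa [integrable_map_measure aestronglyMeasurable_id (hmeas i).aemeasurable] at h1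
  have hM_int : Integrable M P := by
    refine (integrable_finset_sum Finset.univ fun i _ => (hXint i).abs).mono'
      hM_meas.aestronglyMeasurable (ae_of_all _ fun ω => ?_)
    rw [Real.norm_eq_abs, abs_le]
    constructor
    · have h1 := hle 0 ω
      have h3 : |X 0 ω| ≤ ∑ i, |X i ω| :=
        Finset.single_le_sum (f := fun i => |X i ω|) (fun i _ => abs_nonneg _) (Finset.mem_univ 0)
      have h2 : -(X 0 ω) ≤ |X 0 ω| := neg_le_abs _
      linarith
    · exact ciSup_le fun i => le_trans (le_abs_self _)
        (Finset.single_le_sum (f := fun i => |X i ω|) (fun i _ => abs_nonneg _)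
          (Finset.mem_univ i))
  have hMpos_int : Integrable (fun ω => max 0 (M ω)) P := by
    simpa [Pi.sup_def] using (integrable_const (0:ℝ)).sup hM_int
  have hMneg_int : Integrable (fun ω => max (-(M ω)) 0) P := by
    simpa [Pi.sup_def] using hM_int.neg.sup (integrable_const (0:ℝ))
  have hsplit : ∫ ω, M ω ∂P = (∫ ω, max 0 (M ω) ∂P) - ∫ ω, max (-(M ω)) 0 ∂P := by
    rw [← integral_sub hMpos_int hMneg_int]
    refine integral_congr_ae (ae_of_all _ fun ω => ?_)
    show M ω = max 0 (M ω) - max (-(M ω)) 0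
    rcases le_total (M ω) 0 with h | h
    · rw [max_eq_left h, max_eq_left (neg_nonneg.mpr h)]
      ring
    · rw [max_eq_right h, max_eq_right (neg_nonpos.mpr h)]
      ring
  -- definitions
  let A : Set Ω := {ω | ∀ i : (({0}ᶜ : Finset (Fin n)) : Finset (Fin n)), X i ω < 0}
  have hA_meas : MeasurableSet A := by
    have hAeq : A = ⋂ i : (({0}ᶜ : Finset (Fin n)) : Finset (Fin n)), X i ⁻¹' Set.Iio 0 := by
      ext ω; simp [A, Set.mem_iInter]
    rw [hAeq]
    exact MeasurableSet.iInter fun i => (hmeas i) measurableSet_Iio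
  let f : Ω → ℝ := fun ω => max (-(X 0 ω)) 0
  let g : Ω → ℝ := A.indicator fun _ => 1
  have hf_meas : Measurable f := (hmeas 0).neg.max measurable_const
  have hg_meas : Measurable g := measurable_const.indicator hA_meas
  have hf_nonneg : ∀ ω, 0 ≤ f ω := fun ω => le_max_right _ _
  have hg_nonneg : ∀ ω, 0 ≤ g ω := fun ω => Set.indicator_nonneg (fun _ _ => zero_le_one) ω
  have hg_le_one : ∀ ω, g ω ≤ 1 := fun ω => Set.indicator_le_self' (fun _ _ => zero_le_one) ω
  have h_pt : ∀ ω, max (-(M ω)) 0 ≤ f ω * g ω := by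
    intro ω
    by_cases hω : ω ∈ A
    · have : g ω = 1 := by simp [g, Set.indicator_of_mem hω]
      rw [this, mul_one]
      exact max_le_max (neg_le_neg (hle 0 ω)) le_rfl
    · have hgz : g ω = 0 := by simp [g, Set.indicator_of_notMem hω]
      rw [hgz, mul_zero]
      have : ∃ i : (({0}ᶜ : Finset (Fin n)) : Finset (Fin n)), 0 ≤ X i ω := by
        by_contra hcon
        push_neg at hcon
        exact hω fun i => hcon i
      obtain ⟨i, hi⟩ := this
      have h0M : 0 ≤ M ω := le_trans hi (hle i ω)
      exact max_le (by linarith) le_rfl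
  have hf_int : Integrable f P := by
    simpa [Pi.sup_def] using (hXint 0).neg.sup (integrable_const (0:ℝ))
  have hfg_int : Integrable (fun ω => f ω * g ω) P := by
    refine hf_int.mono' (hf_meas.mul hg_meas).aestronglyMeasurable (ae_of_all _ fun ω => ?_)
    rw [Real.norm_eq_abs, abs_of_nonneg (mul_nonneg (hf_nonneg ω) (hg_nonneg ω))]
    calc f ω * g ω ≤ f ω * 1 := mul_le_mul_of_nonneg_left (hg_le_one ω) (hf_nonneg ω)
    _ = f ω := mul_one _
  -- independence of f and g
  have hIndep : IndepFun f g P := by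
    have hST : Disjoint ({0} : Finset (Fin n)) ({0}ᶜ : Finset (Fin n)) :=
      disjoint_compl_right
    have base := hindep.indepFun_finset {0} ({0}ᶜ) hST hmeas
    have hφ : Measurable (fun v : (({0} : Finset (Fin n)) : Finset (Fin n)) → ℝ =>
        max (-(v ⟨0, Finset.mem_singleton_self 0⟩)) 0) :=
      (measurable_pi_apply _).neg.max measurable_const
    have hsψ : MeasurableSet {v : (({0}ᶜ : Finset (Fin n)) : Finset (Fin n)) → ℝ |
        ∀ i, v i < 0} := by
      have : {v : (({0}ᶜ : Finset (Fin n)) : Finset (Fin n)) → ℝ | ∀ i, v i < 0}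
          = ⋂ i, (fun v : (({0}ᶜ : Finset (Fin n)) : Finset (Fin n)) → ℝ => v i) ⁻¹'
            Set.Iio 0 := by
        ext v; simp [Set.mem_iInter]
      rw [this]
      exact MeasurableSet.iInter fun i => (measurable_pi_apply i) measurableSet_Iio
    have hψ : Measurable ({v : (({0}ᶜ : Finset (Fin n)) : Finset (Fin n)) → ℝ |
        ∀ i, v i < 0}.indicator (fun _ => (1:ℝ))) :=
      measurable_const.indicator hsψ
    exact base.comp hφ hψ
  have hprod : ∫ ω, f ω * g ω ∂P = (∫ ω, f ω ∂P) * ∫ ω, g ω ∂P :=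
    hIndep.integral_fun_mul_eq_mul_integral
      hf_meas.aestronglyMeasurable hg_meas.aestronglyMeasurable
  -- ∫ g = P(A), and P(A) ≤ (1/2)^(n-1)
  have hg_int_val : ∫ ω, g ω ∂P = (P A).toReal := by
    simp only [g]
    rw [integral_indicator_const _ hA_meas]
    simp [measureReal_def]
  have hPA : P A ≤ 2⁻¹ ^ (n - 1) := by
    have hA_eq : A = ⋂ i ∈ ({0}ᶜ : Finset (Fin n)), X i ⁻¹' Set.Iio 0 := by
      ext ω
      simp only [A, Set.mem_setOf_eq, Set.mem_iInter, Set.mem_preimage, Set.mem_Iio]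
      exact ⟨fun h i hi => h ⟨i, hi⟩, fun h i => h i i.2⟩
    rw [hA_eq, hindep.meas_biInter fun i _ => ⟨Set.Iio 0, measurableSet_Iio, rfl⟩]
    calc ∏ i ∈ ({0}ᶜ : Finset (Fin n)), P (X i ⁻¹' Set.Iio 0)
        ≤ ∏ _i ∈ ({0}ᶜ : Finset (Fin n)), (2⁻¹ : ℝ≥0∞) := by
          refine Finset.prod_le_prod' fun i _ => ?_
          rw [← Measure.map_apply (hmeas i) measurableSet_Iio, hX i]
          exact my_gaussianReal_Iio_le_half _ _ (hμ i)
    _ = 2⁻¹ ^ (n - 1) := by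
          rw [Finset.prod_const]
          congr 1
          simp [Finset.card_compl]
  have hg_le : ∫ ω, g ω ∂P ≤ c := by
    rw [hg_int_val]
    have h1 : (P A).toReal ≤ ((2⁻¹ : ℝ≥0∞) ^ (n - 1)).toReal := by
      refine ENNReal.toReal_mono ?_ hPA
      exact ENNReal.pow_ne_top (by simp)
    refine h1.trans_eq ?_
    rw [ENNReal.toReal_pow]
    have h2 : ((2⁻¹ : ℝ≥0∞)).toReal = (2:ℝ)⁻¹ := by
      rw [ENNReal.toReal_inv]; norm_num
    rw [h2, hc]
    have h3 : (1 - (n:ℤ)) = -((n - 1 : ℕ) : ℤ) := by push_cast; omega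
    rw [h3, zpow_neg, zpow_natCast, inv_pow]
  -- ∫ f ≤ ∫ max 0 M
  have hX0pos_int : Integrable (fun ω => max (X 0 ω) 0) P := by
    simpa [Pi.sup_def] using (hXint 0).sup (integrable_const (0:ℝ))
  have hf_le : ∫ ω, f ω ∂P ≤ ∫ ω, max 0 (M ω) ∂P := by
    have e1 : ∫ ω, f ω ∂P = ∫ x, max (-x) 0 ∂(gaussianReal (μ 0) (Real.toNNReal (σ 0 ^ 2))) := by
      rw [← hX 0, integral_map (hmeas 0).aemeasurable
        (measurable_neg.max measurable_const).aestronglyMeasurable]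
    have e2 : ∫ x, max x 0 ∂(gaussianReal (μ 0) (Real.toNNReal (σ 0 ^ 2)))
        = ∫ ω, max (X 0 ω) 0 ∂P := by
      rw [← hX 0, integral_map (hmeas 0).aemeasurable
        (measurable_id'.max measurable_const).aestronglyMeasurable]
    calc ∫ ω, f ω ∂P
        = ∫ x, max (-x) 0 ∂(gaussianReal (μ 0) (Real.toNNReal (σ 0 ^ 2))) := e1
    _ ≤ ∫ x, max x 0 ∂(gaussianReal (μ 0) (Real.toNNReal (σ 0 ^ 2))) :=
        my_gauss_negpart_le_pospart _ _ (hμ 0)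
    _ = ∫ ω, max (X 0 ω) 0 ∂P := e2
    _ ≤ ∫ ω, max 0 (M ω) ∂P := by
        refine integral_mono hX0pos_int hMpos_int fun ω => ?_
        rw [max_comm]
        exact max_le_max le_rfl (hle 0 ω)
  -- conclusion
  have h0f : 0 ≤ ∫ ω, f ω ∂P := integral_nonneg hf_nonneg
  have h0g : 0 ≤ ∫ ω, g ω ∂P := integral_nonneg hg_nonneg
  have h0pos : 0 ≤ ∫ ω, max 0 (M ω) ∂P := integral_nonneg fun ω => le_max_left _ _
  have key : ∫ ω, max (-(M ω)) 0 ∂P ≤ c * ∫ ω, max 0 (M ω) ∂P := by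
    calc ∫ ω, max (-(M ω)) 0 ∂P ≤ ∫ ω, f ω * g ω ∂P :=
        integral_mono hMneg_int hfg_int h_pt
    _ = (∫ ω, f ω ∂P) * ∫ ω, g ω ∂P := hprod
    _ ≤ (∫ ω, max 0 (M ω) ∂P) * c := mul_le_mul hf_le hg_le h0g h0pos
    _ = c * ∫ ω, max 0 (M ω) ∂P := mul_comm _ _
  show (1 - c) * (∫ ω, max 0 (M ω) ∂P) ≤ ∫ ω, M ω ∂P
  rw [hsplit, sub_mul, one_mul]
  linarith
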